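/- Let G = (V, E) be a finite simple claw-free graph containing a simplicial clique K_s, with an operator realization and a simplicial mode χ with respect to K_s. Then for every u ∈ ℂ: T_G(u)·(1 + u·Σ_{j ∈ K_s} h(j))·χ·T_G(−u) = T_G(u)·T_G(−u)·(1 − u·Σ_{j ∈ K_s} h(j))·χ. (Lemma 15, the fundamental identity.) -/
import Mathlib


open scoped Classical

universe u

/-- `G` is claw-free: no vertex has three pairwise distinct, pairwise non-adjacent neighbors. -/
def ClawFree {V : Type u} (G : SimpleGraph V) : Prop :=
  ¬ ∃ c x y z : V, x ≠ y ∧ x ≠ z ∧ y ≠ z ∧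
    G.Adj c x ∧ G.Adj c y ∧ G.Adj c z ∧ ¬ G.Adj x y ∧ ¬ G.Adj x z ∧ ¬ G.Adj y z

/-- `S` is an independent set of `G`. -/
def IsIndep {V : Type u} (G : SimpleGraph V) (S : Finset V) : Prop :=
  ∀ u ∈ S, ∀ v ∈ S, ¬ G.Adj u v

/-- The product `h(S) = ∏_{v ∈ S} h v`, well defined when the factors pairwise commute. -/
noncomputable def hProd {V : Type u} {d : ℕ} (h : V → Matrix (Fin d) (Fin d) ℂ)
    (S : Finset V) : Matrix (Fin d) (Fin d) ℂ :=
  if hc : (S : Set V).Pairwise fun u v => Commute (h u) (h v) then S.noncommProd h hc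
  else 0

/-- The transfer operator `T_{G[U]}(u) = Σ_S (−u)^{|S|}·h(S)`, summed over all independent
sets `S ⊆ U` of `G`. -/
noncomputable def transferOp {V : Type u} {d : ℕ} [Fintype V] [DecidableEq V]
    (G : SimpleGraph V) (h : V → Matrix (Fin d) (Fin d) ℂ) (U : Finset V) (u : ℂ) :
    Matrix (Fin d) (Fin d) ℂ :=
  ∑ S ∈ Finset.univ.filter (fun S : Finset V => S ⊆ U ∧ IsIndep G S),
    (-u) ^ S.card • hProd h S

/-- `K` is a simplicial clique of `G`: a clique such that, for every `j ∈ K`, the set of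
neighbors of `j` outside `K` is a clique. -/
def IsSimplicialClique {V : Type u} (G : SimpleGraph V) (K : Finset V) : Prop :=
  (∀ u ∈ K, ∀ v ∈ K, u ≠ v → G.Adj u v) ∧
    ∀ j ∈ K, ∀ u v : V, u ∉ K → v ∉ K → u ≠ v → G.Adj j u → G.Adj j v → G.Adj u v

section Aux

variable {V : Type u} {d : ℕ} {G : SimpleGraph V} {h : V → Matrix (Fin d) (Fin d) ℂ}

lemma indep_mono {S S' : Finset V} (hS : IsIndep G S) (hsub : S' ⊆ S) : IsIndep G S' :=
  fun a ha b hb => hS a (hsub ha) b (hsub hb)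

lemma pairwise_commute (hcomm : ∀ a b : V, a ≠ b → ¬ G.Adj a b → h a * h b = h b * h a)
    {S : Finset V} (hS : IsIndep G S) :
    (S : Set V).Pairwise fun a b => Commute (h a) (h b) :=
  fun a ha b hb hab => hcomm a b hab (hS a (Finset.mem_coe.mp ha) b (Finset.mem_coe.mp hb))

lemma hProd_eq (hcomm : ∀ a b : V, a ≠ b → ¬ G.Adj a b → h a * h b = h b * h a)
    {S : Finset V} (hS : IsIndep G S) :
    hProd h S = S.noncommProd h (pairwise_commute hcomm hS) :=
  dif_pos _

lemma hProd_empty : hProd h (∅ : Finset V) = 1 := by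
  rw [hProd, dif_pos (by simp)]
  simp

lemma hProd_insert (hcomm : ∀ a b : V, a ≠ b → ¬ G.Adj a b → h a * h b = h b * h a)
    [DecidableEq V] {S : Finset V} {a : V} (ha : a ∉ S)
    (hS : IsIndep G (insert a S)) :
    hProd h (insert a S) = h a * hProd h S := by
  rw [hProd_eq hcomm hS, hProd_eq hcomm (indep_mono hS (Finset.subset_insert a S)),
    Finset.noncommProd_insert_of_notMem _ _ _ _ ha]

lemma sign_comm [DecidableEq V]
    (hcomm : ∀ a b : V, a ≠ b → ¬ G.Adj a b → h a * h b = h b * h a)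
    (X : Matrix (Fin d) (Fin d) ℂ) (Q : V → Prop)
    (hA : ∀ v, Q v → X * h v = -(h v * X)) (hC : ∀ v, ¬ Q v → X * h v = h v * X) :
    ∀ S : Finset V, IsIndep G S →
      X * hProd h S = ((-1 : ℂ) ^ (S.filter Q).card) • (hProd h S * X) := by
  intro S
  induction S using Finset.induction_on with
  | empty => intro _; simp [hProd_empty]
  | @insert a S ha IH =>
    intro hS
    have hSi : IsIndep G S := indep_mono hS (Finset.subset_insert a S)
    have hstep := IH hSi
    rw [hProd_insert hcomm ha hS]
    by_cases hQ : Q a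
    · rw [Finset.filter_insert, if_pos hQ,
        Finset.card_insert_of_notMem (fun hmem => ha (Finset.mem_of_mem_filter a hmem))]
      rw [← mul_assoc, hA a hQ, neg_mul, mul_assoc, hstep, pow_succ]
      rw [mul_smul_comm, ← neg_smul, mul_comm ((-1:ℂ)^(S.filter Q).card)]
      rw [← smul_smul]
      simp [mul_assoc]
    · rw [Finset.filter_insert, if_neg hQ]
      rw [← mul_assoc, hC a hQ, mul_assoc, hstep]
      rw [mul_smul_comm]
      simp [mul_assoc]

lemma neg_one_pow_sq (n : ℕ) : ((-1:ℂ) ^ n) * ((-1:ℂ) ^ n) = 1 := by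
  rw [← pow_add, ← two_mul, pow_mul]
  norm_num

lemma sign_comm' [DecidableEq V]
    (hcomm : ∀ a b : V, a ≠ b → ¬ G.Adj a b → h a * h b = h b * h a)
    (X : Matrix (Fin d) (Fin d) ℂ) (Q : V → Prop)
    (hA : ∀ v, Q v → X * h v = -(h v * X)) (hC : ∀ v, ¬ Q v → X * h v = h v * X)
    (S : Finset V) (hS : IsIndep G S) :
    hProd h S * X = ((-1 : ℂ) ^ (S.filter Q).card) • (X * hProd h S) := by
  rw [sign_comm hcomm X Q hA hC S hS, smul_smul, neg_one_pow_sq, one_smul]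

end Aux

section Card
variable {V : Type u} [DecidableEq V] {G : SimpleGraph V} {Ks : Finset V}

lemma cap_card_le_one (hKs : IsSimplicialClique G Ks) {S : Finset V} (hS : IsIndep G S) :
    (S ∩ Ks).card ≤ 1 := by
  refine Finset.card_le_one.mpr fun a ha b hb => ?_
  rw [Finset.mem_inter] at ha hb
  by_contra hne
  exact hS a ha.1 b hb.1 (hKs.1 a ha.2 b hb.2 hne)

lemma filter_sdiff_card_le_one (hKs : IsSimplicialClique G Ks) {S : Finset V} (hS : IsIndep G S)
    {j : V} (hj : j ∈ Ks) :
    ((S.filter (fun v => G.Adj j v)) \ Ks).card ≤ 1 := by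
  refine Finset.card_le_one.mpr fun a ha b hb => ?_
  rw [Finset.mem_sdiff, Finset.mem_filter] at ha hb
  by_contra hne
  exact hS a ha.1.1 b hb.1.1 (hKs.2 j hj a b ha.2 hb.2 hne ha.1.2 hb.1.2)

lemma cap_eq_filter_inter (hKs : IsSimplicialClique G Ks) {S : Finset V}
    {j : V} (hj : j ∈ Ks) (hjS : j ∉ S) :
    (S.filter (fun v => G.Adj j v)) ∩ Ks = S ∩ Ks := by
  ext x
  simp only [Finset.mem_inter, Finset.mem_filter]
  constructor
  · rintro ⟨⟨hxS, _⟩, hxK⟩; exact ⟨hxS, hxK⟩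
  · rintro ⟨hxS, hxK⟩
    have hne : j ≠ x := fun hE => hjS (hE ▸ hxS)
    exact ⟨⟨hxS, hKs.1 j hj x hxK hne⟩, hxK⟩

lemma filter_card_decomp (hKs : IsSimplicialClique G Ks) {S : Finset V}
    {j : V} (hj : j ∈ Ks) (hjS : j ∉ S) :
    (S.filter (fun v => G.Adj j v)).card
      = (S ∩ Ks).card + ((S.filter (fun v => G.Adj j v)) \ Ks).card := by
  rw [← cap_eq_filter_inter hKs hj hjS]
  exact (Finset.card_inter_add_card_sdiff _ _).symm

lemma filter_eq_empty_of_mem {S : Finset V} (hS : IsIndep G S) {j : V} (hjS : j ∈ S) :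
    S.filter (fun v => G.Adj j v) = ∅ := by
  refine Finset.filter_eq_empty_iff.mpr fun v hv => hS j hjS v hv

end Card

section Classify
variable {V : Type u} [DecidableEq V] {G : SimpleGraph V} {Ks : Finset V}

lemma coeff_zero (hKs : IsSimplicialClique G Ks) {S : Finset V} (hS : IsIndep G S)
    {j : V} (hj : j ∈ Ks)
    (hnota : ¬ (j ∉ S ∧ S.filter (fun v => G.Adj j v) = ∅))
    (hnotd : ¬ (j ∉ S ∧ (S ∩ Ks).Nonempty ∧ S.filter (fun v => G.Adj j v) = S ∩ Ks)) :
    ((-1:ℂ) ^ ((S ∩ Ks).card) + (-1:ℂ) ^ ((S.filter (fun v => G.Adj j v)).card)) = 0 := by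
  by_cases hjS : j ∈ S
  · have h1 : S.filter (fun v => G.Adj j v) = ∅ := filter_eq_empty_of_mem hS hjS
    have h2 : (S ∩ Ks).card = 1 := by
      refine le_antisymm (cap_card_le_one hKs hS) ?_
      exact Finset.card_pos.mpr ⟨j, Finset.mem_inter.mpr ⟨hjS, hj⟩⟩
    rw [h1, h2]
    simp
  · have hdec := filter_card_decomp hKs hj hjS (S := S)
    have hr := filter_sdiff_card_le_one hKs hS hj (S := S)
    rcases Nat.le_one_iff_eq_zero_or_eq_one.mp hr with hr0 | hr1
    · exfalso
      have hsub : (S.filter (fun v => G.Adj j v)) ⊆ Ks :=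
        Finset.sdiff_eq_empty_iff_subset.mp (Finset.card_eq_zero.mp hr0)
      have hF : S.filter (fun v => G.Adj j v) = S ∩ Ks := by
        rw [← cap_eq_filter_inter hKs hj hjS]
        exact (Finset.inter_eq_left.mpr hsub).symm
      rcases Finset.eq_empty_or_nonempty (S ∩ Ks) with hE | hNE
      · exact hnota ⟨hjS, by rw [hF, hE]⟩
      · exact hnotd ⟨hjS, hNE, hF⟩
    · rw [hdec, hr1, pow_succ]
      ring

end Classify

section Special
variable {V : Type u} {d : ℕ} {G : SimpleGraph V} {h : V → Matrix (Fin d) (Fin d) ℂ}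
variable {Ks : Finset V} {χ : Matrix (Fin d) (Fin d) ℂ}

lemma hj_sign [DecidableEq V]
    (hanti : ∀ a b : V, G.Adj a b → h a * h b = -(h b * h a))
    (hcomm : ∀ a b : V, a ≠ b → ¬ G.Adj a b → h a * h b = h b * h a)
    (j : V) {S : Finset V} (hS : IsIndep G S) :
    hProd h S * h j
      = ((-1 : ℂ) ^ (S.filter (fun v => G.Adj j v)).card) • (h j * hProd h S) := by
  refine sign_comm' hcomm (h j) (fun v => G.Adj j v) (fun v hv => hanti j v hv)
    (fun v hv => ?_) S hS
  by_cases hvj : v = j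
  · rw [hvj]
  · exact hcomm j v (fun hE => hvj hE.symm) hv

lemma chi_sign [DecidableEq V]
    (hcomm : ∀ a b : V, a ≠ b → ¬ G.Adj a b → h a * h b = h b * h a)
    (hχanti : ∀ j ∈ Ks, χ * h j = -(h j * χ))
    (hχcomm : ∀ v : V, v ∉ Ks → χ * h v = h v * χ)
    {S : Finset V} (hS : IsIndep G S) :
    χ * hProd h S = ((-1 : ℂ) ^ (S ∩ Ks).card) • (hProd h S * χ) := by
  have hx := sign_comm hcomm χ (fun v => v ∈ Ks) hχanti hχcomm S hS
  have hfe : @Finset.filter V (fun v => v ∈ Ks) (fun a => Classical.propDecidable _) S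
      = S ∩ Ks := by
    ext x
    simp [Finset.mem_filter]
  rwa [hfe] at hx

end Special

section Claim2
variable {V : Type u} {d : ℕ} {G : SimpleGraph V} {h : V → Matrix (Fin d) (Fin d) ℂ}
variable {Ks : Finset V}

lemma indep_insert [DecidableEq V] {S : Finset V} {j : V} (hS : IsIndep G S)
    (hnadj : ∀ v ∈ S, ¬ G.Adj j v) : IsIndep G (insert j S) := by
  intro a ha b hb
  rcases Finset.mem_insert.mp ha with rfl | haS
  · rcases Finset.mem_insert.mp hb with rfl | hbS
    · exact fun hadj => G.irrefl hadj
    · exact hnadj b hbS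
  · rcases Finset.mem_insert.mp hb with rfl | hbS
    · exact fun hadj => hnadj a haS hadj.symm
    · exact hS a haS b hbS

lemma cap_eq_singleton [DecidableEq V] (hKs : IsSimplicialClique G Ks) {S : Finset V}
    (hS : IsIndep G S) {k : V} (hk : k ∈ S ∩ Ks) : S ∩ Ks = {k} := by
  have hle := cap_card_le_one hKs hS
  refine Finset.eq_singleton_iff_unique_mem.mpr ⟨hk, fun x hx => ?_⟩
  exact Finset.card_le_one.mp hle x hx k hk

lemma pd_basic [DecidableEq V] (hKs : IsSimplicialClique G Ks) {j : V} {S : Finset V}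
    (hjK : j ∈ Ks) (hS : IsIndep G S) (hjS : j ∉ S) (hne : (S ∩ Ks).Nonempty)
    (hfil : S.filter (fun v => G.Adj j v) = S ∩ Ks) (k : V) (hk : k ∈ S ∩ Ks) :
    k ∈ S ∧ k ∈ Ks ∧ k ≠ j ∧ G.Adj j k ∧ S ∩ Ks = {k}
      ∧ IsIndep G (insert j (S.erase k))
      ∧ j ∉ S.erase k
      ∧ (insert j (S.erase k)) ∩ Ks = {j}
      ∧ (insert j (S.erase k)).filter (fun v => G.Adj k v) = {j}
      ∧ (insert j (S.erase k)).card = S.card := by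
  have hkS : k ∈ S := (Finset.mem_inter.mp hk).1
  have hkK : k ∈ Ks := (Finset.mem_inter.mp hk).2
  have hkj : k ≠ j := fun hE => hjS (hE ▸ hkS)
  have hadj : G.Adj j k := hKs.1 j hjK k hkK (Ne.symm hkj)
  have hcap : S ∩ Ks = {k} := cap_eq_singleton hKs hS hk
  have hnadj : ∀ v ∈ S.erase k, ¬ G.Adj j v := by
    intro v hv hA
    have hvS : v ∈ S := Finset.mem_of_mem_erase hv
    have : v ∈ S.filter (fun w => G.Adj j w) := Finset.mem_filter.mpr ⟨hvS, hA⟩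
    rw [hfil, hcap, Finset.mem_singleton] at this
    exact (Finset.ne_of_mem_erase hv) this
  have hind : IsIndep G (insert j (S.erase k)) :=
    indep_insert (indep_mono hS (Finset.erase_subset k S)) hnadj
  have hjS' : j ∉ S.erase k := fun hc => hjS (Finset.mem_of_mem_erase hc)
  have hcap2 : (insert j (S.erase k)) ∩ Ks = {j} := by
    ext x
    simp only [Finset.mem_inter, Finset.mem_insert, Finset.mem_singleton]
    constructor
    · rintro ⟨hx1 | hx2, hxK⟩
      · exact hx1
      · exfalso
        have : x ∈ S ∩ Ks := Finset.mem_inter.mpr ⟨Finset.mem_of_mem_erase hx2, hxK⟩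
        rw [hcap, Finset.mem_singleton] at this
        exact (Finset.ne_of_mem_erase hx2) this
    · rintro rfl
      exact ⟨Or.inl rfl, hjK⟩
  have hfil2 : (insert j (S.erase k)).filter (fun v => G.Adj k v) = {j} := by
    ext x
    simp only [Finset.mem_filter, Finset.mem_insert, Finset.mem_singleton]
    constructor
    · rintro ⟨hx1 | hx2, hxA⟩
      · exact hx1
      · exact absurd hxA (hS k hkS x (Finset.mem_of_mem_erase hx2))
    · rintro rfl
      exact ⟨Or.inl rfl, hadj.symm⟩
  have hcard : (insert j (S.erase k)).card = S.card := by
    rw [Finset.card_insert_of_notMem hjS', Finset.card_erase_add_one hkS]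
  exact ⟨hkS, hkK, hkj, hadj, hcap, hind, hjS', hcap2, hfil2, hcard⟩

set_option maxHeartbeats 1000000 in
lemma claim2 [Fintype V] [DecidableEq V]
    (hanti : ∀ a b : V, G.Adj a b → h a * h b = -(h b * h a))
    (hcomm : ∀ a b : V, a ≠ b → ¬ G.Adj a b → h a * h b = h b * h a)
    (hKs : IsSimplicialClique G Ks) (u : ℂ) :
    ((1 : Matrix (Fin d) (Fin d) ℂ) + u • ∑ j ∈ Ks, h j) *
        (∑ S ∈ Finset.univ.filter (fun S : Finset V => S ⊆ Finset.univ ∧ IsIndep G S),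
          (u ^ S.card * (-1 : ℂ) ^ ((S ∩ Ks).card)) • hProd h S)
      = (∑ S ∈ Finset.univ.filter (fun S : Finset V => S ⊆ Finset.univ ∧ IsIndep G S),
            u ^ S.card • hProd h S)
        - u • ((∑ S ∈ Finset.univ.filter (fun S : Finset V => S ⊆ Finset.univ ∧ IsIndep G S),
            u ^ S.card • hProd h S) * ∑ j ∈ Ks, h j) := by
  set I : Finset (Finset V) :=
    Finset.univ.filter (fun S : Finset V => S ⊆ Finset.univ ∧ IsIndep G S) with hIdef
  have memI : ∀ S : Finset V, S ∈ I ↔ IsIndep G S := by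
    intro S
    simp [hIdef, Finset.subset_univ]
  set Sg : Matrix (Fin d) (Fin d) ℂ := ∑ j ∈ Ks, h j with hSig
  set A : Matrix (Fin d) (Fin d) ℂ :=
    ∑ S ∈ I, (u ^ S.card * (-1 : ℂ) ^ ((S ∩ Ks).card)) • hProd h S with hAdef
  set T : Matrix (Fin d) (Fin d) ℂ := ∑ S ∈ I, u ^ S.card • hProd h S with hTdef
  have E : u • (Sg * A) + u • (T * Sg) = T - A := by
    have step1 : u • (Sg * A)
        = ∑ j ∈ Ks, ∑ S ∈ I,
            (u ^ (S.card + 1) * (-1:ℂ) ^ ((S ∩ Ks).card)) • (h j * hProd h S) := by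
      rw [hSig, hAdef, Finset.sum_mul, Finset.smul_sum]
      refine Finset.sum_congr rfl fun j hj => ?_
      rw [Finset.mul_sum, Finset.smul_sum]
      refine Finset.sum_congr rfl fun S hS => ?_
      rw [mul_smul_comm, smul_smul]
      congr 1
      ring
    have step2 : u • (T * Sg)
        = ∑ j ∈ Ks, ∑ S ∈ I,
            (u ^ (S.card + 1) *
              (-1:ℂ) ^ ((S.filter (fun v => G.Adj j v)).card)) • (h j * hProd h S) := by
      rw [hSig, hTdef, Finset.mul_sum, Finset.smul_sum]
      refine Finset.sum_congr rfl fun j hj => ?_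
      rw [Finset.sum_mul, Finset.smul_sum]
      refine Finset.sum_congr rfl fun S hS => ?_
      rw [smul_mul_assoc, hj_sign hanti hcomm j ((memI S).mp hS), smul_smul, smul_smul]
      congr 1
      ring
    have step3 : u • (Sg * A) + u • (T * Sg)
        = ∑ p ∈ Ks ×ˢ I, (u ^ (p.2.card + 1) *
            ((-1:ℂ) ^ ((p.2 ∩ Ks).card)
              + (-1:ℂ) ^ ((p.2.filter (fun v => G.Adj p.1 v)).card)))
            • (h p.1 * hProd h p.2) := by
      rw [step1, step2, ← Finset.sum_add_distrib, Finset.sum_product]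
      refine Finset.sum_congr rfl fun j hj => ?_
      rw [← Finset.sum_add_distrib]
      refine Finset.sum_congr rfl fun S hS => ?_
      rw [← add_smul]
      congr 1
      ring
    have step5 : T - A
        = ∑ S ∈ I, (u ^ S.card * (1 - (-1:ℂ) ^ ((S ∩ Ks).card))) • hProd h S := by
      rw [hTdef, hAdef, ← Finset.sum_sub_distrib]
      refine Finset.sum_congr rfl fun S hS => ?_
      rw [← sub_smul]
      congr 1
      ring
    have step4 : ∑ p ∈ Ks ×ˢ I, (u ^ (p.2.card + 1) *
            ((-1:ℂ) ^ ((p.2 ∩ Ks).card)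
              + (-1:ℂ) ^ ((p.2.filter (fun v => G.Adj p.1 v)).card)))
            • (h p.1 * hProd h p.2)
        = ∑ S ∈ I, (u ^ S.card * (1 - (-1:ℂ) ^ ((S ∩ Ks).card))) • hProd h S := by
      have memP : ∀ p : V × Finset V, p ∈ Ks ×ˢ I ↔ p.1 ∈ Ks ∧ IsIndep G p.2 := by
        intro p
        rw [Finset.mem_product, memI]
      set Pa : Finset (V × Finset V) := (Ks ×ˢ I).filter
        (fun p => p.1 ∉ p.2 ∧ p.2.filter (fun v => G.Adj p.1 v) = ∅) with hPa
      set Pd : Finset (V × Finset V) := (Ks ×ˢ I).filter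
        (fun p => p.1 ∉ p.2 ∧ (p.2 ∩ Ks).Nonempty ∧
          p.2.filter (fun v => G.Adj p.1 v) = p.2 ∩ Ks) with hPd
      have hsub : Pa ∪ Pd ⊆ Ks ×ˢ I :=
        Finset.union_subset (Finset.filter_subset _ _) (Finset.filter_subset _ _)
      have hzero : ∀ p ∈ Ks ×ˢ I, p ∉ Pa ∪ Pd →
          (u ^ (p.2.card + 1) *
            ((-1:ℂ) ^ ((p.2 ∩ Ks).card)
              + (-1:ℂ) ^ ((p.2.filter (fun v => G.Adj p.1 v)).card)))
            • (h p.1 * hProd h p.2) = 0 := by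
        intro p hp hnp
        obtain ⟨hjK, hS⟩ := (memP p).mp hp
        rw [Finset.mem_union] at hnp
        have hnota : ¬ (p.1 ∉ p.2 ∧ p.2.filter (fun v => G.Adj p.1 v) = ∅) :=
          fun hc => hnp (Or.inl (by rw [hPa, Finset.mem_filter]; exact ⟨hp, hc⟩))
        have hnotd : ¬ (p.1 ∉ p.2 ∧ (p.2 ∩ Ks).Nonempty ∧
            p.2.filter (fun v => G.Adj p.1 v) = p.2 ∩ Ks) :=
          fun hc => hnp (Or.inr (by rw [hPd, Finset.mem_filter]; exact ⟨hp, hc⟩))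
        rw [coeff_zero hKs hS hjK hnota hnotd, mul_zero, zero_smul]
      have hdisj : Disjoint Pa Pd := by
        rw [Finset.disjoint_left]
        intro p hpa hpd
        rw [hPa, Finset.mem_filter] at hpa
        rw [hPd, Finset.mem_filter] at hpd
        obtain ⟨-, -, hfa⟩ := hpa
        obtain ⟨-, -, hne, hfd⟩ := hpd
        rw [hfa] at hfd
        exact (hfd ▸ hne).ne_empty rfl
      have hPdzero : ∑ p ∈ Pd,
          (u ^ (p.2.card + 1) *
            ((-1:ℂ) ^ ((p.2 ∩ Ks).card)
              + (-1:ℂ) ^ ((p.2.filter (fun v => G.Adj p.1 v)).card)))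
            • (h p.1 * hProd h p.2) = 0 := by
        have memPd : ∀ p : V × Finset V, p ∈ Pd ↔ (p.1 ∈ Ks ∧ IsIndep G p.2) ∧
            p.1 ∉ p.2 ∧ (p.2 ∩ Ks).Nonempty ∧
            p.2.filter (fun v => G.Adj p.1 v) = p.2 ∩ Ks := by
          intro p
          rw [hPd, Finset.mem_filter, memP]
        refine Finset.sum_involution
          (fun p hp => ((((memPd p).mp hp).2.2.1.choose),
            insert p.1 (p.2.erase (((memPd p).mp hp).2.2.1.choose)))) ?_ ?_ ?_ ?_
        · intro p hp
          obtain ⟨⟨hjK, hS⟩, hjS, hne, hfil⟩ := (memPd p).mp hp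
          have hkmem : ((memPd p).mp hp).2.2.1.choose ∈ p.2 ∩ Ks :=
            (((memPd p).mp hp).2.2.1).choose_spec
          obtain ⟨hkS, hkK, hkj, hadj, hcap, hind, hjS', hcap2, hfil2, hcard⟩ :=
            pd_basic hKs hjK hS hjS hne hfil _ hkmem
          dsimp only
          have h1 : hProd h p.2 = h (((memPd p).mp hp).2.2.1.choose) *
              hProd h (p.2.erase (((memPd p).mp hp).2.2.1.choose)) := by
            conv_lhs => rw [← Finset.insert_erase hkS]
            exact hProd_insert hcomm (Finset.notMem_erase _ _)
              (by rw [Finset.insert_erase hkS]; exact hS)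
          have h2 : hProd h (insert p.1 (p.2.erase (((memPd p).mp hp).2.2.1.choose)))
              = h p.1 * hProd h (p.2.erase (((memPd p).mp hp).2.2.1.choose)) :=
            hProd_insert hcomm hjS' hind
          have hc1 : (p.2 ∩ Ks).card = 1 := by
            rw [hcap]; exact Finset.card_singleton _
          have hc2 : ((insert p.1 (p.2.erase (((memPd p).mp hp).2.2.1.choose))) ∩ Ks).card
              = 1 := by
            rw [hcap2]; exact Finset.card_singleton _
          have hc3 : ((p.2.filter (fun v => G.Adj p.1 v))).card = 1 := by
            rw [hfil, hcap]; exact Finset.card_singleton _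
          have hc4 : (((insert p.1 (p.2.erase (((memPd p).mp hp).2.2.1.choose))).filter
              (fun v => G.Adj (((memPd p).mp hp).2.2.1.choose) v)).card) = 1 := by
            rw [hfil2]; exact Finset.card_singleton _
          rw [hc1, hc2, hc3, hc4, hcard, h1, h2]
          rw [← smul_add, ← mul_assoc, ← mul_assoc, hanti p.1 _ hadj, neg_mul,
            neg_add_cancel, smul_zero]
        · intro p hp hfne
          obtain ⟨⟨hjK, hS⟩, hjS, hne, hfil⟩ := (memPd p).mp hp
          have hkmem : ((memPd p).mp hp).2.2.1.choose ∈ p.2 ∩ Ks :=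
            (((memPd p).mp hp).2.2.1).choose_spec
          obtain ⟨hkS, hkK, hkj, -, -, -, -, -, -, -⟩ := pd_basic hKs hjK hS hjS hne hfil _ hkmem
          intro hE
          exact hkj (congrArg Prod.fst hE)
        · intro p hp
          obtain ⟨⟨hjK, hS⟩, hjS, hne, hfil⟩ := (memPd p).mp hp
          have hkmem : ((memPd p).mp hp).2.2.1.choose ∈ p.2 ∩ Ks :=
            (((memPd p).mp hp).2.2.1).choose_spec
          obtain ⟨hkS, hkK, hkj, hadj, hcap, hind, hjS', hcap2, hfil2, hcard⟩ :=
            pd_basic hKs hjK hS hjS hne hfil _ hkmem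
          refine (memPd _).mpr ⟨⟨hkK, hind⟩, ?_, ?_, ?_⟩
          · dsimp only
            rw [Finset.mem_insert]
            rintro (hE | hE)
            · exact hkj hE
            · exact Finset.notMem_erase _ _ hE
          · dsimp only
            rw [hcap2]
            exact ⟨p.1, Finset.mem_singleton_self _⟩
          · dsimp only
            rw [hfil2, hcap2]
        · intro p hp
          obtain ⟨⟨hjK, hS⟩, hjS, hne, hfil⟩ := (memPd p).mp hp
          have hkmem : ((memPd p).mp hp).2.2.1.choose ∈ p.2 ∩ Ks :=
            (((memPd p).mp hp).2.2.1).choose_spec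
          obtain ⟨hkS, hkK, hkj, hadj, hcap, hind, hjS', hcap2, hfil2, hcard⟩ :=
            pd_basic hKs hjK hS hjS hne hfil _ hkmem
          have hmin2 : ∀ (hpf : ((insert p.1 (p.2.erase (((memPd p).mp hp).2.2.1.choose)))
              ∩ Ks).Nonempty), hpf.choose = p.1 := by
            intro hpf
            exact Finset.mem_singleton.mp (by rw [← hcap2]; exact hpf.choose_spec)
          refine Prod.ext ?_ ?_
          · dsimp only
            rw [hmin2]
          · dsimp only
            rw [hmin2, Finset.erase_insert hjS', Finset.insert_erase hkS]

      have hPasum : ∑ p ∈ Pa,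
          (u ^ (p.2.card + 1) *
            ((-1:ℂ) ^ ((p.2 ∩ Ks).card)
              + (-1:ℂ) ^ ((p.2.filter (fun v => G.Adj p.1 v)).card)))
            • (h p.1 * hProd h p.2)
          = ∑ S ∈ I, (u ^ S.card * (1 - (-1:ℂ) ^ ((S ∩ Ks).card))) • hProd h S := by
        have memPa : ∀ p : V × Finset V, p ∈ Pa ↔ (p.1 ∈ Ks ∧ IsIndep G p.2) ∧
            p.1 ∉ p.2 ∧ p.2.filter (fun v => G.Adj p.1 v) = ∅ := by
          intro p
          rw [hPa, Finset.mem_filter, memP]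
        have paFacts : ∀ p ∈ Pa, insert p.1 p.2 ∈ I ∧ (insert p.1 p.2) ∩ Ks = {p.1} ∧
            p.2 ∩ Ks = ∅ ∧ (insert p.1 p.2).card = p.2.card + 1 ∧
            hProd h (insert p.1 p.2) = h p.1 * hProd h p.2 := by
          intro p hp
          obtain ⟨⟨hjK, hS⟩, hjS, hfil⟩ := (memPa p).mp hp
          have hnadj : ∀ v ∈ p.2, ¬ G.Adj p.1 v := by
            intro v hv hA
            have : v ∈ p.2.filter (fun w => G.Adj p.1 w) := Finset.mem_filter.mpr ⟨hv, hA⟩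
            rw [hfil] at this
            exact absurd this (Finset.notMem_empty v)
          have hSK : p.2 ∩ Ks = ∅ := by
            rw [Finset.eq_empty_iff_forall_notMem]
            intro x hx
            have hxS : x ∈ p.2 := (Finset.mem_inter.mp hx).1
            have hxK : x ∈ Ks := (Finset.mem_inter.mp hx).2
            have hxj : x ≠ p.1 := fun hE => hjS (hE ▸ hxS)
            exact hnadj x hxS (hKs.1 p.1 hjK x hxK (Ne.symm hxj))
          have hind : IsIndep G (insert p.1 p.2) := indep_insert hS hnadj
          refine ⟨(memI _).mpr hind, ?_, hSK, Finset.card_insert_of_notMem hjS,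
            hProd_insert hcomm hjS hind⟩
          ext x
          simp only [Finset.mem_inter, Finset.mem_insert, Finset.mem_singleton]
          constructor
          · rintro ⟨hx1 | hx2, hxK⟩
            · exact hx1
            · exact absurd (Finset.mem_inter.mpr ⟨hx2, hxK⟩)
                (by rw [hSK]; exact Finset.notMem_empty x)
          · rintro rfl
            exact ⟨Or.inl rfl, hjK⟩
        have hIb : ∑ S ∈ I, (u ^ S.card * (1 - (-1:ℂ) ^ ((S ∩ Ks).card))) • hProd h S
            = ∑ S ∈ I.filter (fun S => (S ∩ Ks).Nonempty),
                (u ^ S.card * (1 - (-1:ℂ) ^ ((S ∩ Ks).card))) • hProd h S := by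
          refine (Finset.sum_subset (Finset.filter_subset _ _) ?_).symm
          intro S hS hnb
          have hSK : S ∩ Ks = ∅ := by
            rw [← Finset.not_nonempty_iff_eq_empty]
            exact fun hne => hnb (Finset.mem_filter.mpr ⟨hS, hne⟩)
          rw [hSK]
          norm_num
        rw [hIb]
        have ibFacts : ∀ T ∈ I.filter (fun S => (S ∩ Ks).Nonempty), ∀ hneT : (T ∩ Ks).Nonempty,
            (hneT.choose ∈ Ks ∧ hneT.choose ∈ T) ∧ T ∩ Ks = {hneT.choose} ∧
            IsIndep G (T.erase (hneT.choose)) ∧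
            (T.erase (hneT.choose)).filter (fun v => G.Adj (hneT.choose) v) = ∅ := by
          intro T hTm hneT
          have hT : IsIndep G T := (memI T).mp (Finset.mem_of_mem_filter T hTm)
          have hk := hneT.choose_spec
          have hkT : hneT.choose ∈ T := (Finset.mem_inter.mp hk).1
          have hkK : hneT.choose ∈ Ks := (Finset.mem_inter.mp hk).2
          refine ⟨⟨hkK, hkT⟩, cap_eq_singleton hKs hT hk, indep_mono hT (Finset.erase_subset _ _), ?_⟩
          rw [Finset.filter_eq_empty_iff]
          intro v hv
          exact hT (hneT.choose) hkT v (Finset.mem_of_mem_erase hv)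
        refine Finset.sum_bij' (fun p _ => insert p.1 p.2)
          (fun T hT => ((Finset.mem_filter.mp hT).2.choose,
            T.erase ((Finset.mem_filter.mp hT).2.choose))) ?_ ?_ ?_ ?_ ?_
        · intro p hp
          obtain ⟨hTI, hTcap, hSK, hcard, hmul⟩ := paFacts p hp
          refine Finset.mem_filter.mpr ⟨hTI, ?_⟩
          rw [hTcap]
          exact ⟨p.1, Finset.mem_singleton_self _⟩
        · intro T hT
          obtain ⟨⟨hkK, hkT⟩, hcapT, hindE, hfilE⟩ := ibFacts T hT (Finset.mem_filter.mp hT).2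
          refine (memPa _).mpr ⟨⟨hkK, hindE⟩, Finset.notMem_erase _ _, hfilE⟩
        · intro p hp
          obtain ⟨hTI, hTcap, hSK, hcard, hmul⟩ := paFacts p hp
          obtain ⟨⟨hjK, hS⟩, hjS, hfil⟩ := (memPa p).mp hp
          have hmin : ∀ (hpf : (insert p.1 p.2 ∩ Ks).Nonempty), hpf.choose = p.1 := by
            intro hpf
            exact Finset.mem_singleton.mp (by rw [← hTcap]; exact hpf.choose_spec)
          refine Prod.ext ?_ ?_
          · dsimp only
            rw [hmin]
          · dsimp only
            rw [hmin, Finset.erase_insert hjS]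
        · intro T hT
          obtain ⟨⟨hkK, hkT⟩, hcapT, hindE, hfilE⟩ := ibFacts T hT (Finset.mem_filter.mp hT).2
          dsimp only
          rw [Finset.insert_erase hkT]
        · intro p hp
          obtain ⟨hTI, hTcap, hSK, hcard, hmul⟩ := paFacts p hp
          obtain ⟨⟨hjK, hS⟩, hjS, hfil⟩ := (memPa p).mp hp
          rw [hSK, hfil, hTcap, hcard, hmul, Finset.card_singleton, Finset.card_empty]
          congr 1
          norm_num
      rw [← Finset.sum_subset hsub hzero, Finset.sum_union hdisj, hPdzero, add_zero, hPasum]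

    rw [step3, step4, step5]
  have E' : u • (Sg * A) + u • (T * Sg) + A = T := by
    rw [E, sub_add_cancel]
  rw [add_mul, one_mul, smul_mul_assoc]
  have hre : A + u • (Sg * A) = (u • (Sg * A) + u • (T * Sg) + A) - u • (T * Sg) := by abel
  rw [hre, E']

end Claim2


section Final
variable {V : Type u} {d : ℕ} {G : SimpleGraph V} {h : V → Matrix (Fin d) (Fin d) ℂ}
variable {Ks : Finset V} {χ : Matrix (Fin d) (Fin d) ℂ}

lemma transferOp_neg [Fintype V] [DecidableEq V] (G : SimpleGraph V)
    (h : V → Matrix (Fin d) (Fin d) ℂ) (u : ℂ) :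
    transferOp G h Finset.univ (-u)
      = ∑ S ∈ Finset.univ.filter (fun S : Finset V => S ⊆ Finset.univ ∧ IsIndep G S),
          u ^ S.card • hProd h S := by
  rw [transferOp]
  refine Finset.sum_congr rfl fun S _ => ?_
  rw [neg_neg]

lemma chi_move [Fintype V] [DecidableEq V]
    (hcomm : ∀ a b : V, a ≠ b → ¬ G.Adj a b → h a * h b = h b * h a)
    (hχanti : ∀ j ∈ Ks, χ * h j = -(h j * χ))
    (hχcomm : ∀ v : V, v ∉ Ks → χ * h v = h v * χ) (u : ℂ) :
    χ * (∑ S ∈ Finset.univ.filter (fun S : Finset V => S ⊆ Finset.univ ∧ IsIndep G S),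
        u ^ S.card • hProd h S)
      = (∑ S ∈ Finset.univ.filter (fun S : Finset V => S ⊆ Finset.univ ∧ IsIndep G S),
          (u ^ S.card * (-1:ℂ) ^ ((S ∩ Ks).card)) • hProd h S) * χ := by
  rw [Finset.mul_sum, Finset.sum_mul]
  refine Finset.sum_congr rfl fun S hS => ?_
  have hSI : IsIndep G S := (Finset.mem_filter.mp hS).2.2
  rw [mul_smul_comm, chi_sign hcomm hχanti hχcomm hSI, smul_smul, smul_mul_assoc]

lemma core_identity [Fintype V] [DecidableEq V]
    (hanti : ∀ a b : V, G.Adj a b → h a * h b = -(h b * h a))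
    (hcomm : ∀ a b : V, a ≠ b → ¬ G.Adj a b → h a * h b = h b * h a)
    (hKs : IsSimplicialClique G Ks)
    (hχanti : ∀ j ∈ Ks, χ * h j = -(h j * χ))
    (hχcomm : ∀ v : V, v ∉ Ks → χ * h v = h v * χ) (u : ℂ) :
    ((1 : Matrix (Fin d) (Fin d) ℂ) + u • ∑ j ∈ Ks, h j) * χ *
        transferOp G h Finset.univ (-u)
      = transferOp G h Finset.univ (-u) *
          ((1 : Matrix (Fin d) (Fin d) ℂ) - u • ∑ j ∈ Ks, h j) * χ := by
  rw [transferOp_neg G h u]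
  rw [mul_assoc, chi_move hcomm hχanti hχcomm u, ← mul_assoc]
  rw [claim2 hanti hcomm hKs u]
  rw [mul_sub, mul_one, mul_smul_comm]

end Final

/-- Lemma 15 (the fundamental identity): for a claw-free graph with a simplicial clique `K_s`,
an operator realization, and a simplicial mode `χ` with respect to `K_s`,
`T_G(u)·(1 + u·Σ_{j ∈ K_s} h(j))·χ·T_G(−u) = T_G(u)·T_G(−u)·(1 − u·Σ_{j ∈ K_s} h(j))·χ`. -/
theorem fundamental_identity {V : Type u} [Fintype V] [DecidableEq V]
    (G : SimpleGraph V) (hcf : ClawFree G) (d : ℕ) (hd : 0 < d)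
    (h : V → Matrix (Fin d) (Fin d) ℂ) (b : V → ℝ) (hb : ∀ v, b v ≠ 0)
    (hsq : ∀ v, h v * h v = ((b v : ℂ)) ^ 2 • (1 : Matrix (Fin d) (Fin d) ℂ))
    (hanti : ∀ u v, G.Adj u v → h u * h v = -(h v * h u))
    (hcomm : ∀ u v, u ≠ v → ¬ G.Adj u v → h u * h v = h v * h u)
    (Ks : Finset V) (hKs : IsSimplicialClique G Ks)
    (χ : Matrix (Fin d) (Fin d) ℂ) (hχsq : χ * χ = 1)
    (hχanti : ∀ j ∈ Ks, χ * h j = -(h j * χ))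
    (hχcomm : ∀ v : V, v ∉ Ks → χ * h v = h v * χ)
    (u : ℂ) :
    transferOp G h Finset.univ u *
        ((1 : Matrix (Fin d) (Fin d) ℂ) + u • ∑ j ∈ Ks, h j) * χ *
        transferOp G h Finset.univ (-u) =
      transferOp G h Finset.univ u * transferOp G h Finset.univ (-u) *
        ((1 : Matrix (Fin d) (Fin d) ℂ) - u • ∑ j ∈ Ks, h j) * χ := by
  have hcore := core_identity hanti hcomm hKs hχanti hχcomm u
  rw [mul_assoc (transferOp G h Finset.univ u), mul_assoc (transferOp G h Finset.univ u),
    hcore, ← mul_assoc, ← mul_assoc]
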